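/- The multilinear polynomial p(x₁,x₂,x₃,x₄) = [x₁,x₂][x₃,x₄] + [x₃,x₄][x₁,x₂] (where [x,y] = xy − yx) is a central polynomial of the real quaternion algebra ℍ: every value p(x₁,x₂,x₃,x₄) with xᵢ ∈ ℍ is a scalar quaternion (lies in ℝ·1), and p is not identically zero on ℍ. -/

import Mathlib

open Quaternion

lemma comm_re_zero (x y : ℍ[ℝ]) : (x * y - y * x).re = 0 := by
  simp [Quaternion.re_mul]; ring

lemma anticomm_scalar (a b : ℍ[ℝ]) (ha : a.re = 0) (hb : b.re = 0) :
    ∃ r : ℝ, a * b + b * a = (r : ℍ[ℝ]) := by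
  refine ⟨(a * b + b * a).re, ?_⟩
  ext <;>
    simp [Quaternion.re_mul, Quaternion.imI_mul, Quaternion.imJ_mul,
      Quaternion.imK_mul, ha, hb] <;> ring

/-- The multilinear polynomial `[x₁,x₂][x₃,x₄] + [x₃,x₄][x₁,x₂]` is a central
polynomial of ℍ: every value is scalar and it is not identically zero. -/
theorem central_polynomial_quaternion :
    (∀ x₁ x₂ x₃ x₄ : ℍ[ℝ], ∃ r : ℝ,
      (x₁ * x₂ - x₂ * x₁) * (x₃ * x₄ - x₄ * x₃) +
        (x₃ * x₄ - x₄ * x₃) * (x₁ * x₂ - x₂ * x₁) = (r : ℍ[ℝ])) ∧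
    (∃ x₁ x₂ x₃ x₄ : ℍ[ℝ],
      (x₁ * x₂ - x₂ * x₁) * (x₃ * x₄ - x₄ * x₃) +
        (x₃ * x₄ - x₄ * x₃) * (x₁ * x₂ - x₂ * x₁) ≠ 0) := by
  constructor
  · intro x₁ x₂ x₃ x₄
    exact anticomm_scalar _ _ (comm_re_zero x₁ x₂) (comm_re_zero x₃ x₄)
  · refine ⟨⟨0,1,0,0⟩, ⟨0,0,1,0⟩, ⟨0,1,0,0⟩, ⟨0,0,1,0⟩, ?_⟩
    intro h
    have := congrArg QuaternionAlgebra.re h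
    simp [Quaternion.re_mul] at this
    erw [QuaternionAlgebra.mk_mul_mk, QuaternionAlgebra.mk_mul_mk] at this
    norm_num at this
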